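/- Let h(ξ) = |1 − r²ξ|^{−1} on the unit circle, where 0 ≤ r < 1. Then every Fourier coefficient ĥ(n) of h is non-negative, and for every probability measure τ on the unit circle, ∫∫ |1 − r²ξ η̄|^{−1} dτ(η) dτ(ξ) ≥ (1/2π)∫₀^{2π} |1 − r²e^{it}|^{−1} dt. -/

import Mathlib

open MeasureTheory Complex
open scoped Real

noncomputable instance : MeasurableSpace Circle := borel Circle
instance : BorelSpace Circle := ⟨rfl⟩

/-- The `n`-th Fourier coefficient of `h(ξ) = |1 − r²ξ|⁻¹` on the unit circle:
`ĥ(n) = (1/2π) ∫₀^{2π} h(e^{it}) e^{−int} dt`. -/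
noncomputable def hHat (r : ℝ) (n : ℤ) : ℂ :=
  (1 / (2 * π) : ℂ) *
    ∫ t in (0 : ℝ)..(2 * π),
      ((‖(1 : ℂ) - (r : ℂ) ^ 2 * Complex.exp (t * Complex.I)‖⁻¹ : ℝ) : ℂ) *
        Complex.exp (-(n : ℂ) * t * Complex.I)

noncomputable def bb (k : ℕ) : ℝ := (Nat.centralBinom k : ℝ) / 4 ^ k

lemma bb_pos (k : ℕ) : 0 < bb k :=
  div_pos (by exact_mod_cast Nat.centralBinom_pos k) (by positivity)

lemma bb_zero : bb 0 = 1 := by simp [bb, Nat.centralBinom]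

lemma bb_rec (k : ℕ) : 2 * ((k : ℝ) + 1) * bb (k + 1) = (2 * k + 1) * bb k := by
  have h : ((k : ℝ) + 1) * ((k + 1).centralBinom : ℝ)
      = 2 * (2 * k + 1) * (k.centralBinom : ℝ) := by
    exact_mod_cast Nat.succ_mul_centralBinom_succ k
  have h4 : (4 : ℝ) ^ k ≠ 0 := by positivity
  unfold bb
  rw [pow_succ]
  linear_combination (1/2 : ℝ) * ((4:ℝ)^k)⁻¹ * h

lemma swap_antidiag (f : ℕ → ℕ → ℝ) (n : ℕ) :
    ∑ kl ∈ Finset.HasAntidiagonal.antidiagonal n, f kl.1 kl.2 = ∑ kl ∈ Finset.HasAntidiagonal.antidiagonal n, f kl.2 kl.1 := by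
  conv_lhs => rw [← Finset.HasAntidiagonal.map_swap_antidiagonal, Finset.sum_map]
  rfl

noncomputable def SS (n : ℕ) : ℝ := ∑ kl ∈ Finset.HasAntidiagonal.antidiagonal n, bb kl.1 * bb kl.2

lemma L1 (n : ℕ) : ∑ kl ∈ Finset.HasAntidiagonal.antidiagonal n, (2 * (kl.1:ℝ)) * (bb kl.1 * bb kl.2)
    = (n : ℝ) * SS n := by
  have hs := swap_antidiag (fun i j => (2 * (i : ℝ)) * (bb i * bb j)) n
  have e : (2:ℝ) * ∑ kl ∈ Finset.HasAntidiagonal.antidiagonal n, (2 * (kl.1:ℝ)) * (bb kl.1 * bb kl.2)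
      = 2 * ((n : ℝ) * SS n) := by
    calc (2:ℝ) * ∑ kl ∈ Finset.HasAntidiagonal.antidiagonal n, (2 * (kl.1:ℝ)) * (bb kl.1 * bb kl.2)
        = (∑ kl ∈ Finset.HasAntidiagonal.antidiagonal n, (2 * (kl.1:ℝ)) * (bb kl.1 * bb kl.2))
          + ∑ kl ∈ Finset.HasAntidiagonal.antidiagonal n, (2 * (kl.1:ℝ)) * (bb kl.1 * bb kl.2) := by ring
      _ = (∑ kl ∈ Finset.HasAntidiagonal.antidiagonal n, (2 * (kl.1:ℝ)) * (bb kl.1 * bb kl.2))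
          + ∑ kl ∈ Finset.HasAntidiagonal.antidiagonal n, (2 * (kl.2:ℝ)) * (bb kl.2 * bb kl.1) := by rw [hs]
      _ = ∑ kl ∈ Finset.HasAntidiagonal.antidiagonal n,
            ((2 * (kl.1:ℝ)) * (bb kl.1 * bb kl.2) + (2 * (kl.2:ℝ)) * (bb kl.2 * bb kl.1)) := by
          rw [Finset.sum_add_distrib]
      _ = 2 * ((n : ℝ) * SS n) := by
          rw [SS, Finset.mul_sum, Finset.mul_sum]
          apply Finset.sum_congr rfl
          intro kl hkl
          have h5 : ((kl.1 : ℝ) + kl.2) = (n : ℝ) := by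
            exact_mod_cast congrArg (Nat.cast : ℕ → ℝ) (Finset.HasAntidiagonal.mem_antidiagonal.mp hkl)
          linear_combination 2 * (bb kl.1 * bb kl.2) * h5
  linarith
  
lemma L2 (n : ℕ) : ∑ kl ∈ Finset.HasAntidiagonal.antidiagonal (n + 1), (2 * (kl.1:ℝ)) * (bb kl.1 * bb kl.2)
    = (n : ℝ) * SS n + SS n := by
  rw [Finset.Nat.antidiagonal_succ, Finset.sum_cons, Finset.sum_map]
  simp only [Nat.cast_zero, mul_zero, zero_mul, zero_add]
  have : ∀ kl ∈ Finset.HasAntidiagonal.antidiagonal n,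
      (2 * ((kl.1 + 1 : ℕ) : ℝ)) * (bb (kl.1 + 1) * bb kl.2)
        = (2 * (kl.1:ℝ)) * (bb kl.1 * bb kl.2) + bb kl.1 * bb kl.2 := by
    intro kl _
    push_cast
    linear_combination bb kl.2 * bb_rec kl.1
  calc ∑ kl ∈ Finset.HasAntidiagonal.antidiagonal n,
        (2 * ((({ toFun := Nat.succ, inj' := Nat.succ_injective } : ℕ ↪ ℕ).prodMap
          (Function.Embedding.refl ℕ) kl).1 : ℝ))
          * (bb (({ toFun := Nat.succ, inj' := Nat.succ_injective } : ℕ ↪ ℕ).prodMap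
              (Function.Embedding.refl ℕ) kl).1
            * bb (({ toFun := Nat.succ, inj' := Nat.succ_injective } : ℕ ↪ ℕ).prodMap
              (Function.Embedding.refl ℕ) kl).2)
      = ∑ kl ∈ Finset.HasAntidiagonal.antidiagonal n,
          ((2 * (kl.1:ℝ)) * (bb kl.1 * bb kl.2) + bb kl.1 * bb kl.2) := by
        apply Finset.sum_congr rfl
        intro kl hkl
        simpa using this kl hkl
    _ = (n : ℝ) * SS n + SS n := by rw [Finset.sum_add_distrib, L1, SS]

lemma SS_eq_one (n : ℕ) : SS n = 1 := by
  induction n with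
  | zero => simp [SS, bb_zero]
  | succ n ih =>
    have key : ((n : ℝ) + 1) * SS (n + 1) = ((n : ℝ) + 1) * SS n := by
      have := L1 (n + 1)
      rw [L2 n] at this
      push_cast at this
      linarith
    have hne : ((n : ℝ) + 1) ≠ 0 := by positivity
    rw [mul_left_cancel₀ hne key, ih]
lemma bb_le_one (k : ℕ) : bb k ≤ 1 := by
  have h := SS_eq_one k
  have hmem : ((k, 0) : ℕ × ℕ) ∈ Finset.HasAntidiagonal.antidiagonal k := by simp
  have hs := Finset.single_le_sum
    (f := fun kl : ℕ × ℕ => bb kl.1 * bb kl.2)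
    (fun i _ => mul_nonneg (bb_pos i.1).le (bb_pos i.2).le) hmem
  rw [SS] at h
  calc bb k = bb k * bb 0 := by rw [bb_zero, mul_one]
    _ ≤ 1 := by rw [← h]; exact hs

lemma sum_antidiag_bb (n : ℕ) : ∑ kl ∈ Finset.HasAntidiagonal.antidiagonal n, bb kl.1 * bb kl.2 = 1 :=
  SS_eq_one n

noncomputable def gg (z : ℂ) : ℂ := ∑' k, ((bb k : ℝ) : ℂ) * z ^ k

lemma summable_gg_norm {z : ℂ} (hz : ‖z‖ < 1) :
    Summable (fun k => ‖((bb k : ℝ) : ℂ) * z ^ k‖) := by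
  apply Summable.of_nonneg_of_le (fun k => norm_nonneg _) (fun k => ?_)
    (summable_geometric_of_lt_one (norm_nonneg z) hz)
  rw [norm_mul, norm_pow]
  calc ‖((bb k : ℝ) : ℂ)‖ * ‖z‖ ^ k ≤ 1 * ‖z‖ ^ k := by
        apply mul_le_mul_of_nonneg_right ?_ (by positivity)
        rw [Complex.norm_real, Real.norm_eq_abs, abs_of_pos (bb_pos k)]
        exact bb_le_one k
    _ = ‖z‖ ^ k := one_mul _

lemma gg_mul_gg {z : ℂ} (hz : ‖z‖ < 1) : gg z * gg z = (1 - z)⁻¹ := by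
  rw [gg, tsum_mul_tsum_eq_tsum_sum_antidiagonal_of_summable_norm
    (summable_gg_norm hz) (summable_gg_norm hz), ← tsum_geometric_of_norm_lt_one hz]
  congr 1
  funext n
  calc ∑ kl ∈ Finset.HasAntidiagonal.antidiagonal n, ((bb kl.1 : ℝ):ℂ) * z ^ kl.1 * (((bb kl.2 : ℝ):ℂ) * z ^ kl.2)
      = ∑ kl ∈ Finset.HasAntidiagonal.antidiagonal n, (((bb kl.1 * bb kl.2 : ℝ)):ℂ) * z ^ n := by
        apply Finset.sum_congr rfl
        intro kl hkl
        rw [← Finset.HasAntidiagonal.mem_antidiagonal.mp hkl]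
        push_cast
        ring
    _ = z ^ n := by
        rw [← Finset.sum_mul, ← Complex.ofReal_sum, sum_antidiag_bb, Complex.ofReal_one, one_mul]

lemma conj_gg (z : ℂ) : starRingEnd ℂ (gg z) = gg (starRingEnd ℂ z) := by
  rw [gg, gg, starRingEnd_apply, tsum_star]
  congr 1; funext k
  rw [star_mul', star_pow, ← starRingEnd_apply, ← starRingEnd_apply, Complex.conj_ofReal]

lemma norm_inv_eq {z : ℂ} (hz : ‖z‖ < 1) :
    ((‖(1:ℂ) - z‖⁻¹ : ℝ) : ℂ) = gg z * gg (starRingEnd ℂ z) := by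
  rw [← conj_gg, Complex.mul_conj]
  congr 1
  rw [Complex.normSq_eq_norm_sq]
  have : ‖gg z‖ ^ 2 = ‖gg z * gg z‖ := by rw [norm_mul]; ring
  rw [this, gg_mul_gg hz, norm_inv]

lemma hasSum_expand {z : ℂ} (hz : ‖z‖ < 1) :
    HasSum (fun kl : ℕ × ℕ =>
      ((bb kl.1 : ℝ) : ℂ) * z ^ kl.1 * (((bb kl.2 : ℝ) : ℂ) * (starRingEnd ℂ z) ^ kl.2))
      ((‖(1:ℂ) - z‖⁻¹ : ℝ) : ℂ) := by
  have hz' : ‖starRingEnd ℂ z‖ < 1 := by rwa [RCLike.norm_conj]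
  have hsum := summable_mul_of_summable_norm (summable_gg_norm hz) (summable_gg_norm hz')
  have := hsum.hasSum
  rwa [show (∑' kl : ℕ × ℕ, ((bb kl.1 : ℝ):ℂ) * z ^ kl.1 * (((bb kl.2 : ℝ):ℂ) * (starRingEnd ℂ z) ^ kl.2))
      = ((‖(1:ℂ) - z‖⁻¹ : ℝ) : ℂ) from ?_] at this
  rw [← tsum_mul_tsum_of_summable_norm (summable_gg_norm hz) (summable_gg_norm hz'),
    ← gg, ← gg, norm_inv_eq hz]
lemma integral_exp_circle (m : ℤ) :
    ∫ t in (0:ℝ)..(2*π), Complex.exp ((m:ℂ) * t * I) = if m = 0 then ((2*π:ℝ):ℂ) else 0 := by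
  by_cases hm : m = 0
  · subst hm
    simp only [Int.cast_zero, zero_mul, Complex.exp_zero, if_pos]
    rw [intervalIntegral.integral_const]
    simp [Real.pi_nonneg]
  · rw [if_neg hm]
    have hc : ((m:ℂ) * I) ≠ 0 := by
      have : ((m:ℂ)) ≠ 0 := by exact_mod_cast hm
      simp [this, Complex.I_ne_zero]
    have : ∀ t : ℝ, (m:ℂ) * t * I = ((m:ℂ) * I) * t := fun t => by ring
    simp only [this]
    rw [integral_exp_mul_complex hc]
    have h1 : Complex.exp ((m:ℂ) * I * (2*π:ℝ)) = 1 := by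
      rw [show (m:ℂ) * I * (2*π:ℝ) = (m:ℤ) * (2 * π * I) by push_cast; ring]
      exact Complex.exp_int_mul_two_pi_mul_I m
    rw [h1]
    simp
noncomputable def cc (r : ℝ) (kl : ℕ × ℕ) : ℝ := bb kl.1 * bb kl.2 * (r^2)^(kl.1 + kl.2)

lemma cc_nonneg (r : ℝ) (kl : ℕ × ℕ) : 0 ≤ cc r kl := by
  have := (bb_pos kl.1).le; have := (bb_pos kl.2).le
  unfold cc; positivity

lemma cc_summable {r : ℝ} (hr0 : 0 ≤ r) (hr1 : r < 1) : Summable (cc r) := by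
  have h2 : r^2 < 1 := by nlinarith
  have h0 : 0 ≤ r^2 := sq_nonneg r
  have hg : Summable (fun kl : ℕ × ℕ => (r^2)^kl.1 * (r^2)^kl.2) :=
    (summable_geometric_of_lt_one h0 h2).mul_of_nonneg
      (summable_geometric_of_lt_one h0 h2) (fun k => by positivity) (fun k => by positivity)
  apply Summable.of_nonneg_of_le (cc_nonneg r) (fun kl => ?_) hg
  unfold cc
  rw [pow_add]
  have b1 := (bb_pos kl.1).le; have b2 := (bb_pos kl.2).le
  have l1 := bb_le_one kl.1; have l2 := bb_le_one kl.2
  have hX : (0:ℝ) ≤ (r^2)^kl.1 * (r^2)^kl.2 := by positivity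
  have h1 : bb kl.1 * bb kl.2 ≤ 1 := mul_le_one₀ l1 b2 l2
  calc bb kl.1 * bb kl.2 * ((r^2)^kl.1 * (r^2)^kl.2) ≤ 1 * ((r^2)^kl.1 * (r^2)^kl.2) :=
        mul_le_mul_of_nonneg_right h1 hX
    _ = (r^2)^kl.1 * (r^2)^kl.2 := one_mul _

lemma znorm {r : ℝ} (hr0 : 0 ≤ r) (hr1 : r < 1) (t : ℝ) :
    ‖(r : ℂ)^2 * Complex.exp (t * I)‖ < 1 := by
  rw [norm_mul, norm_pow, Complex.norm_real, Real.norm_eq_abs, _root_.abs_of_nonneg hr0,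
    Complex.norm_exp_ofReal_mul_I, mul_one]
  nlinarith

lemma term_eq (r : ℝ) (hr0 : 0 ≤ r) (n : ℤ) (t : ℝ) (kl : ℕ × ℕ) :
    ((bb kl.1 : ℝ) : ℂ) * ((r:ℂ)^2 * Complex.exp (t * I)) ^ kl.1 *
      (((bb kl.2 : ℝ) : ℂ) * (starRingEnd ℂ ((r:ℂ)^2 * Complex.exp (t * I))) ^ kl.2) *
        Complex.exp (-(n : ℂ) * t * I)
      = ((cc r kl : ℝ) : ℂ) * Complex.exp ((((kl.1 : ℤ) - kl.2 - n : ℤ) : ℂ) * t * I) := by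
  have hconj : starRingEnd ℂ ((r:ℂ)^2 * Complex.exp (t * I))
      = (r:ℂ)^2 * Complex.exp (-(t:ℂ) * I) := by
    rw [map_mul, map_pow, Complex.conj_ofReal, ← Complex.exp_conj, map_mul, Complex.conj_I,
      Complex.conj_ofReal]
    ring_nf
  rw [hconj]
  rw [mul_pow, mul_pow, ← Complex.exp_nat_mul, ← Complex.exp_nat_mul]
  rw [show ((cc r kl : ℝ) : ℂ) = ((bb kl.1:ℝ):ℂ) * ((bb kl.2:ℝ):ℂ) * ((r:ℂ)^2)^(kl.1 + kl.2) by
    unfold cc; push_cast; ring]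
  have e : Complex.exp ((kl.1:ℂ) * ((t:ℂ) * I)) * Complex.exp ((kl.2:ℂ) * (-(t:ℂ) * I)) *
      Complex.exp (-(n:ℂ) * (t:ℂ) * I)
      = Complex.exp ((((kl.1:ℤ) - kl.2 - n : ℤ):ℂ) * (t:ℂ) * I) := by
    rw [← Complex.exp_add, ← Complex.exp_add]
    congr 1
    push_cast
    ring
  rw [pow_add]
  linear_combination (((bb kl.1:ℝ):ℂ) * ((r:ℂ)^2)^kl.1 * ((bb kl.2:ℝ):ℂ) * ((r:ℂ)^2)^kl.2) * e

lemma e_summable {r : ℝ} (hr0 : 0 ≤ r) (hr1 : r < 1) (n : ℤ) :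
    Summable (fun kl : ℕ × ℕ => if (kl.1:ℤ) - kl.2 = n then cc r kl else 0) := by
  apply Summable.of_nonneg_of_le (fun kl => ?_) (fun kl => ?_) (cc_summable hr0 hr1)
  · split <;> simp [cc_nonneg r _]
  · split
    · exact le_rfl
    · exact cc_nonneg r _

lemma hHat_eq (r : ℝ) (hr0 : 0 ≤ r) (hr1 : r < 1) (n : ℤ) :
    hHat r n = ((∑' kl : ℕ × ℕ, if (kl.1:ℤ) - kl.2 = n then cc r kl else 0 : ℝ) : ℂ) := by
  set e : ℕ × ℕ → ℝ := fun kl => if (kl.1:ℤ) - kl.2 = n then cc r kl else 0 with he_def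
  have he : Summable e := e_summable hr0 hr1 n
  set F : ℕ × ℕ → ℝ → ℂ := fun kl t =>
    ((cc r kl : ℝ) : ℂ) * Complex.exp ((((kl.1 : ℤ) - kl.2 - n : ℤ) : ℂ) * t * I) with hF_def
  have normF : ∀ kl t, ‖F kl t‖ = cc r kl := by
    intro kl t
    rw [hF_def]
    simp only [norm_mul, Complex.norm_real, Real.norm_eq_abs, _root_.abs_of_nonneg (cc_nonneg r kl)]
    rw [show ((((kl.1 : ℤ) - kl.2 - n : ℤ) : ℂ) * t * I)
        = (((((kl.1 : ℤ) - kl.2 - n : ℤ) : ℝ) * t : ℝ) : ℂ) * I by push_cast; ring]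
    rw [Complex.norm_exp_ofReal_mul_I, mul_one]
  have step : HasSum (fun kl => ∫ t in (0:ℝ)..(2*π), F kl t)
      (∫ t in (0:ℝ)..(2*π),
        ((‖(1 : ℂ) - (r : ℂ) ^ 2 * Complex.exp (t * Complex.I)‖⁻¹ : ℝ) : ℂ) *
          Complex.exp (-(n : ℂ) * t * Complex.I)) := by
    apply intervalIntegral.hasSum_integral_of_dominated_convergence
      (bound := fun kl (_ : ℝ) => cc r kl)
    · intro kl
      apply Continuous.aestronglyMeasurable
      apply Continuous.mul continuous_const
      apply Complex.continuous_exp.comp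
      fun_prop
    · intro kl
      filter_upwards with t _
      rw [normF]
    · filter_upwards with t _
      exact cc_summable hr0 hr1
    · exact intervalIntegrable_const
    · filter_upwards with t _
      have h := (hasSum_expand (znorm hr0 hr1 t)).mul_right (Complex.exp (-(n:ℂ) * t * I))
      rwa [show (fun kl : ℕ × ℕ =>
          ((bb kl.1 : ℝ) : ℂ) * ((r:ℂ)^2 * Complex.exp (t * I)) ^ kl.1 *
            (((bb kl.2 : ℝ) : ℂ) * (starRingEnd ℂ ((r:ℂ)^2 * Complex.exp (t * I))) ^ kl.2) *
              Complex.exp (-(n : ℂ) * t * I)) = fun kl => F kl t from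
        funext (fun kl => term_eq r hr0 n t kl)] at h
  have eval : ∀ kl : ℕ × ℕ, (∫ t in (0:ℝ)..(2*π), F kl t) = (((2*π) * e kl : ℝ) : ℂ) := by
    intro kl
    rw [hF_def]
    simp only
    rw [intervalIntegral.integral_const_mul, integral_exp_circle]
    rw [he_def]
    simp only [sub_eq_zero]
    by_cases hkl : (kl.1 : ℤ) - kl.2 = n
    · rw [if_pos (by omega), if_pos hkl]
      push_cast
      ring
    · rw [if_neg (by omega), if_neg hkl]
      simp
  rw [show (fun kl => ∫ t in (0:ℝ)..(2*π), F kl t) = fun kl => (((2*π) * e kl : ℝ) : ℂ) from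
    funext eval] at step
  have step2 : HasSum (fun kl => (((2*π) * e kl : ℝ) : ℂ)) ((((2*π) * ∑' kl, e kl : ℝ)) : ℂ) := by
    exact Complex.ofRealCLM.hasSum ((he.hasSum.mul_left (2*π)))
  have := step.unique step2
  rw [hHat, this]
  have hπ : (π : ℝ) ≠ 0 := Real.pi_ne_zero
  push_cast
  rw [div_mul_eq_mul_div, one_mul, mul_comm, mul_div_assoc]
  rw [div_self (by simpa using hπ), mul_one]
section D
variable (r : ℝ) (τ : Measure Circle) [IsProbabilityMeasure τ]

lemma circle_norm (ξ : Circle) : ‖(ξ:ℂ)‖ = 1 := by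
  exact Circle.norm_coe ξ

lemma circle_cont : Continuous (fun ξ : Circle => (ξ:ℂ)) := continuous_subtype_val

lemma znorm2 (hr0 : 0 ≤ r) (hr1 : r < 1) (ξ η : Circle) :
    ‖(r:ℂ)^2 * (ξ:ℂ) * starRingEnd ℂ (η:ℂ)‖ < 1 := by
  rw [norm_mul, norm_mul, RCLike.norm_conj, circle_norm, circle_norm, norm_pow,
    Complex.norm_real, Real.norm_eq_abs, _root_.abs_of_nonneg hr0]
  nlinarith

lemma term_eq2 (kl : ℕ × ℕ) (ξ η : Circle) :
    ((bb kl.1 : ℝ) : ℂ) * ((r:ℂ)^2 * (ξ:ℂ) * starRingEnd ℂ (η:ℂ)) ^ kl.1 *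
      (((bb kl.2 : ℝ) : ℂ) * (starRingEnd ℂ ((r:ℂ)^2 * (ξ:ℂ) * starRingEnd ℂ (η:ℂ))) ^ kl.2)
    = ((cc r kl : ℝ) : ℂ) * ((ξ:ℂ) ^ kl.1 * (starRingEnd ℂ (ξ:ℂ)) ^ kl.2) *
        ((starRingEnd ℂ (η:ℂ)) ^ kl.1 * (η:ℂ) ^ kl.2) := by
  rw [map_mul, map_mul, map_pow, Complex.conj_ofReal, Complex.conj_conj]
  rw [show ((cc r kl : ℝ) : ℂ) = ((bb kl.1:ℝ):ℂ) * ((bb kl.2:ℝ):ℂ) * ((r:ℂ)^2)^(kl.1 + kl.2) by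
    unfold cc; push_cast; ring]
  rw [pow_add]
  ring

noncomputable def Mm (kl : ℕ × ℕ) : ℂ :=
  ∫ ξ : Circle, (ξ:ℂ) ^ kl.1 * (starRingEnd ℂ (ξ:ℂ)) ^ kl.2 ∂τ

lemma mom_cont (kl : ℕ × ℕ) : Continuous
    (fun ξ : Circle => (ξ:ℂ) ^ kl.1 * (starRingEnd ℂ (ξ:ℂ)) ^ kl.2) := by
  apply Continuous.mul
  · exact (circle_cont.pow kl.1)
  · exact ((Complex.continuous_conj.comp circle_cont).pow kl.2)

lemma mom_norm_one (kl : ℕ × ℕ) (ξ : Circle) :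
    ‖(ξ:ℂ) ^ kl.1 * (starRingEnd ℂ (ξ:ℂ)) ^ kl.2‖ = 1 := by
  rw [norm_mul, norm_pow, norm_pow, RCLike.norm_conj, circle_norm]
  simp

lemma Mm_norm_le (kl : ℕ × ℕ) : ‖Mm τ kl‖ ≤ 1 := by
  refine le_trans (norm_integral_le_integral_norm _) ?_
  have : (fun ξ : Circle => ‖(ξ:ℂ) ^ kl.1 * (starRingEnd ℂ (ξ:ℂ)) ^ kl.2‖) = fun _ => (1:ℝ) :=
    funext (mom_norm_one kl)
  rw [this, integral_const, probReal_univ]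
  simp

lemma Mm_diag (k : ℕ) : Mm τ (k, k) = 1 := by
  unfold Mm
  have : (fun ξ : Circle => (ξ:ℂ) ^ k * (starRingEnd ℂ (ξ:ℂ)) ^ k) = fun _ => (1:ℂ) := by
    funext ξ
    rw [← mul_pow, Complex.mul_conj, Circle.normSq_coe, Complex.ofReal_one, one_pow]
  rw [this, integral_const, probReal_univ]
  simp

lemma Mm_conj (kl : ℕ × ℕ) :
    (∫ η : Circle, (starRingEnd ℂ (η:ℂ)) ^ kl.1 * (η:ℂ) ^ kl.2 ∂τ)
      = starRingEnd ℂ (Mm τ kl) := by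
  unfold Mm
  rw [← integral_conj]
  have : (fun η : Circle => starRingEnd ℂ ((η:ℂ) ^ kl.1 * (starRingEnd ℂ (η:ℂ)) ^ kl.2))
      = fun η : Circle => (starRingEnd ℂ (η:ℂ)) ^ kl.1 * (η:ℂ) ^ kl.2 := by
    funext η
    rw [map_mul, map_pow, map_pow, Complex.conj_conj]
  rw [this]
lemma mom_norm_one' (kl : ℕ × ℕ) (ξ : Circle) :
    ‖(starRingEnd ℂ (ξ:ℂ)) ^ kl.1 * (ξ:ℂ) ^ kl.2‖ = 1 := by
  rw [norm_mul, norm_pow, norm_pow, RCLike.norm_conj, circle_norm]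
  simp

lemma double_hasSum (hr0 : 0 ≤ r) (hr1 : r < 1) :
    HasSum (fun kl : ℕ × ℕ => cc r kl * Complex.normSq (Mm τ kl))
      (∫ ξ : Circle, ∫ η : Circle,
        ‖(1 : ℂ) - (r : ℂ) ^ 2 * (ξ : ℂ) * starRingEnd ℂ (η : ℂ)‖⁻¹ ∂τ ∂τ) := by
  have hcs := cc_summable hr0 hr1
  -- inner expansion
  have inner : ∀ ξ : Circle, HasSum
      (fun kl : ℕ × ℕ => (((cc r kl : ℝ):ℂ) * ((ξ:ℂ) ^ kl.1 * (starRingEnd ℂ (ξ:ℂ)) ^ kl.2))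
          * starRingEnd ℂ (Mm τ kl))
      (∫ η : Circle, ((‖(1 : ℂ) - (r : ℂ) ^ 2 * (ξ:ℂ) * starRingEnd ℂ (η:ℂ)‖⁻¹ : ℝ) : ℂ) ∂τ) := by
    intro ξ
    have step : HasSum
        (fun kl : ℕ × ℕ => ∫ η : Circle,
          (((cc r kl : ℝ):ℂ) * ((ξ:ℂ) ^ kl.1 * (starRingEnd ℂ (ξ:ℂ)) ^ kl.2))
            * ((starRingEnd ℂ (η:ℂ)) ^ kl.1 * (η:ℂ) ^ kl.2) ∂τ)
        (∫ η : Circle, ((‖(1 : ℂ) - (r : ℂ) ^ 2 * (ξ:ℂ) * starRingEnd ℂ (η:ℂ)‖⁻¹ : ℝ) : ℂ) ∂τ) := by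
      apply MeasureTheory.hasSum_integral_of_dominated_convergence
        (bound := fun kl (_ : Circle) => cc r kl)
      · intro kl
        apply Continuous.aestronglyMeasurable
        exact continuous_const.mul ((Complex.continuous_conj.comp circle_cont).pow kl.1 |>.mul
          (circle_cont.pow kl.2))
      · intro kl
        filter_upwards with η
        rw [norm_mul, norm_mul, mom_norm_one kl ξ, mom_norm_one' kl η,
          Complex.norm_real, Real.norm_eq_abs, _root_.abs_of_nonneg (cc_nonneg r kl)]
        simp
      · filter_upwards with η
        exact hcs
      · exact integrable_const _
      · filter_upwards with η
        have h := hasSum_expand (znorm2 r hr0 hr1 ξ η)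
        rwa [show (fun kl : ℕ × ℕ =>
            ((bb kl.1 : ℝ) : ℂ) * ((r:ℂ)^2 * (ξ:ℂ) * starRingEnd ℂ (η:ℂ)) ^ kl.1 *
              (((bb kl.2 : ℝ) : ℂ) *
                (starRingEnd ℂ ((r:ℂ)^2 * (ξ:ℂ) * starRingEnd ℂ (η:ℂ))) ^ kl.2))
          = fun kl : ℕ × ℕ =>
            (((cc r kl : ℝ):ℂ) * ((ξ:ℂ) ^ kl.1 * (starRingEnd ℂ (ξ:ℂ)) ^ kl.2))
              * ((starRingEnd ℂ (η:ℂ)) ^ kl.1 * (η:ℂ) ^ kl.2) from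
          funext fun kl => term_eq2 r kl ξ η] at h
    have : (fun kl : ℕ × ℕ => ∫ η : Circle,
          (((cc r kl : ℝ):ℂ) * ((ξ:ℂ) ^ kl.1 * (starRingEnd ℂ (ξ:ℂ)) ^ kl.2))
            * ((starRingEnd ℂ (η:ℂ)) ^ kl.1 * (η:ℂ) ^ kl.2) ∂τ)
        = fun kl : ℕ × ℕ =>
          (((cc r kl : ℝ):ℂ) * ((ξ:ℂ) ^ kl.1 * (starRingEnd ℂ (ξ:ℂ)) ^ kl.2))
            * starRingEnd ℂ (Mm τ kl) := by
      funext kl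
      rw [MeasureTheory.integral_const_mul, Mm_conj]
    rwa [this] at step
  -- outer expansion
  have outer : HasSum
      (fun kl : ℕ × ℕ => ∫ ξ : Circle,
        ((((cc r kl : ℝ):ℂ) * ((ξ:ℂ) ^ kl.1 * (starRingEnd ℂ (ξ:ℂ)) ^ kl.2))
          * starRingEnd ℂ (Mm τ kl)) ∂τ)
      (∫ ξ : Circle, ∫ η : Circle,
        ((‖(1 : ℂ) - (r : ℂ) ^ 2 * (ξ:ℂ) * starRingEnd ℂ (η:ℂ)‖⁻¹ : ℝ) : ℂ) ∂τ ∂τ) := by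
    apply MeasureTheory.hasSum_integral_of_dominated_convergence
      (bound := fun kl (_ : Circle) => cc r kl)
    · intro kl
      apply Continuous.aestronglyMeasurable
      exact (continuous_const.mul ((circle_cont.pow kl.1).mul
        ((Complex.continuous_conj.comp circle_cont).pow kl.2))).mul continuous_const
    · intro kl
      filter_upwards with ξ
      rw [norm_mul, norm_mul, mom_norm_one kl ξ, Complex.norm_real, Real.norm_eq_abs,
        _root_.abs_of_nonneg (cc_nonneg r kl), mul_one, RCLike.norm_conj]
      calc cc r kl * ‖Mm τ kl‖ ≤ cc r kl * 1 :=
            mul_le_mul_of_nonneg_left (Mm_norm_le τ kl) (cc_nonneg r kl)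
        _ = cc r kl := mul_one _
    · filter_upwards with ξ
      exact hcs
    · exact integrable_const _
    · filter_upwards with ξ
      exact inner ξ
  -- evaluate outer integrals
  have eval : (fun kl : ℕ × ℕ => ∫ ξ : Circle,
        ((((cc r kl : ℝ):ℂ) * ((ξ:ℂ) ^ kl.1 * (starRingEnd ℂ (ξ:ℂ)) ^ kl.2))
          * starRingEnd ℂ (Mm τ kl)) ∂τ)
      = fun kl : ℕ × ℕ => ((cc r kl * Complex.normSq (Mm τ kl) : ℝ) : ℂ) := by
    funext kl
    have : (fun ξ : Circle =>
        ((((cc r kl : ℝ):ℂ) * ((ξ:ℂ) ^ kl.1 * (starRingEnd ℂ (ξ:ℂ)) ^ kl.2))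
          * starRingEnd ℂ (Mm τ kl)))
        = fun ξ : Circle => (((cc r kl : ℝ):ℂ) * starRingEnd ℂ (Mm τ kl))
            * ((ξ:ℂ) ^ kl.1 * (starRingEnd ℂ (ξ:ℂ)) ^ kl.2) := by
      funext ξ; ring
    rw [this, MeasureTheory.integral_const_mul]
    show (((cc r kl : ℝ):ℂ) * starRingEnd ℂ (Mm τ kl)) * Mm τ kl = _
    rw [mul_assoc, mul_comm (starRingEnd ℂ (Mm τ kl)), Complex.mul_conj]
    push_cast
    ring
  rw [eval] at outer
  -- convert complex double integral to real double integral
  have conv1 : (∫ ξ : Circle, ∫ η : Circle,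
        ((‖(1 : ℂ) - (r : ℂ) ^ 2 * (ξ:ℂ) * starRingEnd ℂ (η:ℂ)‖⁻¹ : ℝ) : ℂ) ∂τ ∂τ)
      = (((∫ ξ : Circle, ∫ η : Circle,
          ‖(1 : ℂ) - (r : ℂ) ^ 2 * (ξ:ℂ) * starRingEnd ℂ (η:ℂ)‖⁻¹ ∂τ ∂τ : ℝ)) : ℂ) := by
    calc (∫ ξ : Circle, ∫ η : Circle,
          ((‖(1 : ℂ) - (r : ℂ) ^ 2 * (ξ:ℂ) * starRingEnd ℂ (η:ℂ)‖⁻¹ : ℝ) : ℂ) ∂τ ∂τ)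
        = ∫ ξ : Circle, (((∫ η : Circle,
            ‖(1 : ℂ) - (r : ℂ) ^ 2 * (ξ:ℂ) * starRingEnd ℂ (η:ℂ)‖⁻¹ ∂τ : ℝ)) : ℂ) ∂τ := by
          congr 1
          funext ξ
          exact integral_ofReal
      _ = _ := integral_ofReal
  rw [conv1] at outer
  have := Complex.reCLM.hasSum outer
  simpa using this
end D

/-- Every Fourier coefficient of `h(ξ) = |1 − r²ξ|⁻¹` (for `0 ≤ r < 1`) is non-negative,
and for every probability measure `τ` on the unit circle,
`∫∫ |1 − r²ξη̄|⁻¹ dτ(η) dτ(ξ) ≥ (1/2π)∫₀^{2π} |1 − r²e^{it}|⁻¹ dt`. -/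
theorem stmt8 (r : ℝ) (hr0 : 0 ≤ r) (hr1 : r < 1)
    (τ : Measure Circle) [IsProbabilityMeasure τ] :
    (∀ n : ℤ, 0 ≤ (hHat r n).re ∧ (hHat r n).im = 0) ∧
    (1 / (2 * π)) *
        (∫ t in (0 : ℝ)..(2 * π), ‖(1 : ℂ) - (r : ℂ) ^ 2 * Complex.exp (t * Complex.I)‖⁻¹)
      ≤ ∫ ξ : Circle, ∫ η : Circle,
          ‖(1 : ℂ) - (r : ℂ) ^ 2 * (ξ : ℂ) * starRingEnd ℂ (η : ℂ)‖⁻¹ ∂τ ∂τ := by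
  have nonneg_term : ∀ (n : ℤ) (kl : ℕ × ℕ),
      0 ≤ (if (kl.1:ℤ) - kl.2 = n then cc r kl else 0) := by
    intro n kl
    split
    · exact cc_nonneg r kl
    · exact le_rfl
  constructor
  · intro n
    rw [hHat_eq r hr0 hr1 n]
    refine ⟨?_, Complex.ofReal_im _⟩
    rw [Complex.ofReal_re]
    exact tsum_nonneg (nonneg_term n)
  · -- the LHS equals (hHat r 0).re = ∑' diag terms
    have h0 : hHat r 0 = (((1 / (2 * π)) *
        (∫ t in (0 : ℝ)..(2 * π),
          ‖(1 : ℂ) - (r : ℂ) ^ 2 * Complex.exp (t * Complex.I)‖⁻¹) : ℝ) : ℂ) := by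
      rw [hHat]
      have : (fun t : ℝ =>
          ((‖(1 : ℂ) - (r : ℂ) ^ 2 * Complex.exp (t * Complex.I)‖⁻¹ : ℝ) : ℂ) *
            Complex.exp (-((0:ℤ) : ℂ) * t * Complex.I))
          = fun t : ℝ =>
            ((‖(1 : ℂ) - (r : ℂ) ^ 2 * Complex.exp (t * Complex.I)‖⁻¹ : ℝ) : ℂ) := by
        funext t
        simp
      rw [this, intervalIntegral.integral_ofReal]
      push_cast
      ring
    have h1 := hHat_eq r hr0 hr1 0
    rw [h0] at h1
    have h2 : (1 / (2 * π)) *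
        (∫ t in (0 : ℝ)..(2 * π), ‖(1 : ℂ) - (r : ℂ) ^ 2 * Complex.exp (t * Complex.I)‖⁻¹)
        = ∑' kl : ℕ × ℕ, if (kl.1:ℤ) - kl.2 = 0 then cc r kl else 0 :=
      Complex.ofReal_injective h1
    rw [h2]
    have hd := double_hasSum r τ hr0 hr1
    rw [← hd.tsum_eq]
    apply Summable.tsum_le_tsum ?_ (e_summable hr0 hr1 0) hd.summable
    intro kl
    by_cases hkl : (kl.1:ℤ) - kl.2 = 0
    · rw [if_pos hkl]
      have hk : kl.1 = kl.2 := by omega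
      have hkl2 : kl = (kl.1, kl.1) := Prod.ext rfl hk.symm
      rw [hkl2, Mm_diag]
      simp
    · rw [if_neg hkl]
      exact mul_nonneg (cc_nonneg r kl) (Complex.normSq_nonneg _)
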